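/- Let (A, ≤, ', 0, 1) be a finite orthomodular poset, (T, R) a serial time frame, and R* the relation defined by: s R* t iff for all q ∈ A^T, G(q)(s) ≤ q(t) ≤ F(q)(s) and H(q)(t) ≤ q(s) ≤ P(q)(t) (where an element compared with a set means comparison with all its members). Then R ⊆ R*, and for all q ∈ A^T, s ∈ T: P(q)(s) ≈₂ P*(q)(s), F(q)(s) ≈₂ F*(q)(s), H(q)(s) ≈₁ H*(q)(s), G(q)(s) ≈₁ G*(q)(s), where the starred operators are defined via R* in place of R. -/

import Mathlib

section
variable (A : Type*)

/-- Set of minimal upper bounds. -/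
def MinU [PartialOrder A] (S : Set A) : Set A := {a | Minimal (· ∈ upperBounds S) a}

/-- Set of maximal lower bounds. -/
def MaxL [PartialOrder A] (S : Set A) : Set A := {a | Maximal (· ∈ lowerBounds S) a}

/-- An orthomodular poset: a bounded poset with an antitone involution that is a
complementation, such that orthogonal elements have a join and the orthomodular law holds. -/
structure OMP [PartialOrder A] [BoundedOrder A] where
  compl : A → A
  compl_antitone : ∀ a b : A, a ≤ b → compl b ≤ compl a
  compl_involutive : ∀ a : A, compl (compl a) = a
  sup_compl : ∀ a : A, IsLUB {a, compl a} ⊤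
  inf_compl : ∀ a : A, IsGLB {a, compl a} ⊥
  ortho_sup : ∀ a b : A, a ≤ compl b → ∃ c, IsLUB {a, b} c
  oml : ∀ a b m : A, a ≤ b → IsGLB {b, compl a} m → IsLUB {a, m} b

end

section
variable {A T : Type*} [PartialOrder A]

/-- `B ≤₁ C`: every element of `B` is below some element of `C`. -/
def le1 (B C : Set A) : Prop := ∀ b ∈ B, ∃ c ∈ C, b ≤ c

/-- `B ≤₂ C`: every element of `C` is above some element of `B`. -/
def le2 (B C : Set A) : Prop := ∀ c ∈ C, ∃ b ∈ B, b ≤ c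

/-- The tense operator `P(q)(s) := Min U({q(t) : t R s})`. -/
def Pop (R : T → T → Prop) (q : T → A) (s : T) : Set A := MinU A (q '' {t | R t s})

/-- The tense operator `F(q)(s) := Min U({q(t) : s R t})`. -/
def Fop (R : T → T → Prop) (q : T → A) (s : T) : Set A := MinU A (q '' {t | R s t})

/-- The tense operator `H(q)(s) := Max L({q(t) : t R s})`. -/
def Hop (R : T → T → Prop) (q : T → A) (s : T) : Set A := MaxL A (q '' {t | R t s})

/-- The tense operator `G(q)(s) := Max L({q(t) : s R t})`. -/
def Gop (R : T → T → Prop) (q : T → A) (s : T) : Set A := MaxL A (q '' {t | R s t})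

/-- A relation is serial if every element has a predecessor and a successor. -/
def Serial (R : T → T → Prop) : Prop := ∀ s : T, (∃ r, R r s) ∧ (∃ t, R s t)

end

section
variable {A T : Type*} [PartialOrder A]

/-- The constructed preference relation `R*`: `s R* t` iff for all `q ∈ A^T`,
`G(q)(s) ≤ q(t) ≤ F(q)(s)` and `H(q)(t) ≤ q(s) ≤ P(q)(t)`. -/
def Rstar (R : T → T → Prop) (s t : T) : Prop :=
  ∀ q : T → A,
    (∀ g ∈ Gop R q s, g ≤ q t) ∧ (∀ f ∈ Fop R q s, q t ≤ f) ∧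
    (∀ h ∈ Hop R q t, h ≤ q s) ∧ (∀ p ∈ Pop R q t, q s ≤ p)

/-- `X ≈₁ Y` iff `X ≤₁ Y` and `Y ≤₁ X`. -/
def approx1 (X Y : Set A) : Prop := le1 X Y ∧ le1 Y X

/-- `X ≈₂ Y` iff `X ≤₂ Y` and `Y ≤₂ X`. -/
def approx2 (X Y : Set A) : Prop := le2 X Y ∧ le2 Y X

end

section Aux
variable {A : Type*} [PartialOrder A] [BoundedOrder A] [Finite A]

lemma minU_eq_of {S S' : Set A} (hsub : S ⊆ S')
    (h : ∀ x ∈ S', ∀ m ∈ MinU A S, x ≤ m) : MinU A S' = MinU A S := by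
  have hub : upperBounds S' = upperBounds S := by
    apply Set.Subset.antisymm (upperBounds_mono_set hsub)
    intro a ha x hx
    obtain ⟨m, hm_le, hm_min⟩ := Finite.exists_le_minimal ha
    exact le_trans (h x hx m hm_min) hm_le
  unfold MinU
  rw [hub]

lemma maxL_eq_of {S S' : Set A} (hsub : S ⊆ S')
    (h : ∀ x ∈ S', ∀ m ∈ MaxL A S, m ≤ x) : MaxL A S' = MaxL A S := by
  have hlb : lowerBounds S' = lowerBounds S := by
    apply Set.Subset.antisymm (lowerBounds_mono_set hsub)
    intro a ha x hx
    obtain ⟨m, hm_le, hm_max⟩ := Finite.exists_le_maximal ha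
    exact le_trans hm_le (h x hx m hm_max)
  unfold MaxL
  rw [hlb]

lemma approx2_refl (X : Set A) : approx2 X X :=
  ⟨fun c hc => ⟨c, hc, le_refl c⟩, fun c hc => ⟨c, hc, le_refl c⟩⟩

lemma approx1_refl (X : Set A) : approx1 X X :=
  ⟨fun c hc => ⟨c, hc, le_refl c⟩, fun c hc => ⟨c, hc, le_refl c⟩⟩

end Aux

/-- `R ⊆ R*`, and the tense operators constructed by `(T, R*)` agree with those constructed
by `(T, R)` up to the equivalences `≈₁` (for `H`, `G`) and `≈₂` (for `P`, `F`). -/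
theorem stmt_18 {A T : Type*} [PartialOrder A] [BoundedOrder A] [Finite A] (M : OMP A)
    (R : T → T → Prop) (hR : Serial R) :
    (∀ s t : T, R s t → Rstar (A := A) R s t) ∧
    (∀ (q : T → A) (s : T),
      approx2 (Pop R q s) (Pop (Rstar (A := A) R) q s) ∧
      approx2 (Fop R q s) (Fop (Rstar (A := A) R) q s) ∧
      approx1 (Hop R q s) (Hop (Rstar (A := A) R) q s) ∧
      approx1 (Gop R q s) (Gop (Rstar (A := A) R) q s)) := by
  have hRsub : ∀ s t : T, R s t → Rstar (A := A) R s t := by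
    intro s t hst q
    refine ⟨?_, ?_, ?_, ?_⟩
    · intro g hg
      exact hg.1 ⟨t, hst, rfl⟩
    · intro f hf
      exact hf.1 ⟨t, hst, rfl⟩
    · intro h hh
      exact hh.1 ⟨s, hst, rfl⟩
    · intro p hp
      exact hp.1 ⟨s, hst, rfl⟩
  refine ⟨hRsub, fun q s => ?_⟩
  have hsub1 : q '' {t | R t s} ⊆ q '' {t | Rstar (A := A) R t s} :=
    Set.image_mono (fun t ht => hRsub t s ht)
  have hsub2 : q '' {t | R s t} ⊆ q '' {t | Rstar (A := A) R s t} :=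
    Set.image_mono (fun t ht => hRsub s t ht)
  have hP : Pop (Rstar (A := A) R) q s = Pop R q s := by
    apply minU_eq_of hsub1
    rintro x ⟨t, ht, rfl⟩ m hm
    exact (ht q).2.2.2 m hm
  have hF : Fop (Rstar (A := A) R) q s = Fop R q s := by
    apply minU_eq_of hsub2
    rintro x ⟨t, ht, rfl⟩ m hm
    exact (ht q).2.1 m hm
  have hH : Hop (Rstar (A := A) R) q s = Hop R q s := by
    apply maxL_eq_of hsub1
    rintro x ⟨t, ht, rfl⟩ m hm
    exact (ht q).2.2.1 m hm
  have hG : Gop (Rstar (A := A) R) q s = Gop R q s := by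
    apply maxL_eq_of hsub2
    rintro x ⟨t, ht, rfl⟩ m hm
    exact (ht q).1 m hm
  rw [hP, hF, hH, hG]
  exact ⟨approx2_refl _, approx2_refl _, approx1_refl _, approx1_refl _⟩
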